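/- Let d ≥ 1 be a natural number, let ℝ^d denote EuclideanSpace ℝ (Fin d) with Lebesgue measure, and let k, m be real numbers with 0 ≤ k < m. There exists a constant C > 0, depending only on d, m and k, such that for every measurable function g : ℝ^d → ℝ and every G > 0 with 0 ≤ g(v) ≤ G for almost every v, one has ∫_{ℝ^d} ‖v‖^k g(v) dv ≤ C · G^{(m−k)/(m+d)} · ( ∫_{ℝ^d} ‖v‖^m g(v) dv )^{(k+d)/(m+d)}. -/

import Mathlib

open MeasureTheory ENNReal

lemma moment_interp_aux (c k m : ℝ) (d : ℕ) (hk : 0 ≤ k) (hkm : k < m) (x G : ℝ)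
    (hx : 0 < x) (hG : 0 < G) :
    G * ((x / G) ^ ((1:ℝ) / (m + d))) ^ k * ((x / G) ^ ((1:ℝ) / (m + d))) ^ (d : ℕ) * c
      + ((x / G) ^ ((1:ℝ) / (m + d))) ^ (k - m) * x
    = (c + 1) * G ^ ((m - k) / (m + d)) * x ^ ((k + d) / (m + d)) := by
  have hd0 : (0:ℝ) ≤ (d:ℝ) := Nat.cast_nonneg d
  have hs : (0:ℝ) < m + d := by linarith
  have hxG : (0:ℝ) < x / G := div_pos hx hG
  have hR : ∀ t : ℝ, ((x / G) ^ ((1:ℝ) / (m + d))) ^ t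
      = x ^ (t / (m + d)) * G ^ (-(t / (m + d))) := by
    intro t
    rw [← Real.rpow_mul hxG.le, Real.div_rpow hx.le hG.le, div_eq_mul_inv,
      ← Real.rpow_neg hG.le]
    ring_nf
  rw [← Real.rpow_natCast ((x / G) ^ ((1:ℝ) / (m + d))) d, hR k, hR d, hR (k - m)]
  have e1 : G * (x ^ (k / (m + d)) * G ^ (-(k / (m + d))))
      * (x ^ ((d:ℝ) / (m + d)) * G ^ (-((d:ℝ) / (m + d)))) * c
      = c * (G ^ (1 - k / (m + d) - (d:ℝ) / (m + d)) * x ^ (k / (m + d) + (d:ℝ) / (m + d))) := by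
    rw [Real.rpow_add hx, sub_sub, Real.rpow_sub hG, Real.rpow_one, Real.rpow_add hG,
      Real.rpow_neg hG.le, Real.rpow_neg hG.le]
    field_simp
  have e2 : x ^ ((k - m) / (m + d)) * G ^ (-((k - m) / (m + d))) * x
      = G ^ ((m - k) / (m + d)) * x ^ ((k - m) / (m + d) + 1) := by
    rw [Real.rpow_add hx, Real.rpow_one]
    have : -((k - m) / (m + d)) = (m - k) / (m + d) := by ring
    rw [this]; ring
  rw [e1, e2]
  have h3 : 1 - k / (m + d) - (d:ℝ) / (m + d) = (m - k) / (m + d) := by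
    field_simp
    ring
  have h4 : k / (m + d) + (d:ℝ) / (m + d) = (k + d) / (m + d) := by ring
  have h5 : (k - m) / (m + d) + 1 = (k + d) / (m + d) := by
    field_simp
    ring
  rw [h3, h4, h5]; ring

/-- Velocity-moment interpolation: for `0 ≤ g ≤ G` a.e.,
`∫ ‖v‖^k g ≤ C · G^{(m−k)/(m+d)} · (∫ ‖v‖^m g)^{(k+d)/(m+d)}`. -/
theorem moment_interpolation (d : ℕ) (hd : 1 ≤ d) (k m : ℝ) (hk : 0 ≤ k) (hkm : k < m) :
    ∃ C : ℝ, 0 < C ∧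
      ∀ g : EuclideanSpace ℝ (Fin d) → ℝ, Measurable g →
      ∀ G : ℝ, 0 < G →
      (∀ᵐ v : EuclideanSpace ℝ (Fin d), 0 ≤ g v ∧ g v ≤ G) →
      (∫⁻ v : EuclideanSpace ℝ (Fin d), (‖v‖₊ : ℝ≥0∞) ^ k * ENNReal.ofReal (g v)) ≤
        ENNReal.ofReal (C * G ^ ((m - k) / (m + d))) *
          (∫⁻ v : EuclideanSpace ℝ (Fin d), (‖v‖₊ : ℝ≥0∞) ^ m * ENNReal.ofReal (g v)) ^
            ((k + d) / (m + d)) := by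
  set E := EuclideanSpace ℝ (Fin d) with hE
  haveI : Nontrivial E := by
    refine ⟨⟨EuclideanSpace.single (⟨0, hd⟩ : Fin d) (1:ℝ), 0, ?_⟩⟩
    intro h
    have h1 : ‖EuclideanSpace.single (⟨0, hd⟩ : Fin d) (1:ℝ)‖ = 1 := by
      rw [EuclideanSpace.norm_single]; simp
    rw [h] at h1
    simp at h1
  have hd1 : (1:ℝ) ≤ (d:ℝ) := by exact_mod_cast hd
  have hm : 0 < m := lt_of_le_of_lt hk hkm
  have hs : (0:ℝ) < m + d := by linarith
  have hβ : 0 < (k + d) / (m + d) := by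
    apply div_pos <;> linarith
  set B : ℝ≥0∞ := volume (Metric.ball (0 : E) 1) with hB
  have hBtop : B ≠ ∞ := measure_ball_lt_top.ne
  set c : ℝ := B.toReal with hc
  have hc0 : 0 ≤ c := ENNReal.toReal_nonneg
  refine ⟨c + 1, by linarith, ?_⟩
  intro g hgm G hG hgae
  set M := ∫⁻ v : E, (‖v‖₊ : ℝ≥0∞) ^ m * ENNReal.ofReal (g v) with hM
  have hmeasm : Measurable fun v : E => (‖v‖₊ : ℝ≥0∞) ^ m * ENNReal.ofReal (g v) :=
    (measurable_nnnorm.coe_nnreal_ennreal.pow_const m).mul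
      (ENNReal.measurable_ofReal.comp hgm)
  have hCpos : (0:ℝ) < (c + 1) * G ^ ((m - k) / (m + d)) := by positivity
  rcases eq_or_ne M ∞ with hMtop | hMtop
  · rw [hMtop, ENNReal.top_rpow_of_pos hβ, ENNReal.mul_top
      (by simpa [ENNReal.ofReal_eq_zero] using hCpos.not_ge)]
    exact le_top
  rcases eq_or_ne M 0 with hM0 | hM0
  · have hz : (fun v : E => (‖v‖₊ : ℝ≥0∞) ^ m * ENNReal.ofReal (g v)) =ᵐ[volume] 0 :=
      (lintegral_eq_zero_iff hmeasm).1 hM0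
    have hne : ∀ᵐ v : E, v ≠ 0 := by
      have h0 : volume ({(0:E)} : Set E) = 0 := measure_singleton _
      rw [ae_iff]
      convert h0 using 2
      ext v; simp
    have hz' : (fun v : E => (‖v‖₊ : ℝ≥0∞) ^ k * ENNReal.ofReal (g v)) =ᵐ[volume] 0 := by
      filter_upwards [hz, hne] with v h1 h2
      have hv0 : (‖v‖₊ : ℝ≥0∞) ≠ 0 := by
        simpa [norm_eq_zero] using h2
      have hg0 : ENNReal.ofReal (g v) = 0 := by
        rcases mul_eq_zero.1 h1 with h | h
        · exact absurd h (by
            simp [ENNReal.rpow_eq_zero_iff, hv0, hm.ne', ENNReal.coe_ne_top])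
        · exact h
      simp [hg0]
    rw [lintegral_congr_ae hz']
    simp
  -- main case
  set x := M.toReal with hx
  have hx0 : 0 < x := ENNReal.toReal_pos hM0 hMtop
  have hMx : M = ENNReal.ofReal x := (ENNReal.ofReal_toReal hMtop).symm
  set R := (x / G) ^ ((1:ℝ) / (m + d)) with hRdef
  have hR0 : 0 < R := Real.rpow_pos_of_pos (div_pos hx0 hG) _
  have hpt : ∀ᵐ v : E, (‖v‖₊ : ℝ≥0∞) ^ k * ENNReal.ofReal (g v) ≤
      (Metric.ball (0:E) R).indicator (fun v : E => (‖v‖₊ : ℝ≥0∞) ^ k * ENNReal.ofReal G) v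
        + ENNReal.ofReal (R ^ (k - m)) * ((‖v‖₊ : ℝ≥0∞) ^ m * ENNReal.ofReal (g v)) := by
    filter_upwards [hgae] with v hv
    by_cases hvR : v ∈ Metric.ball (0:E) R
    · rw [Set.indicator_of_mem hvR]
      exact le_add_right (mul_le_mul_right (ENNReal.ofReal_le_ofReal hv.2) _)
    · rw [Set.indicator_of_notMem hvR, zero_add]
      rw [Metric.mem_ball, dist_zero_right, not_lt] at hvR
      have hnv : ENNReal.ofReal R ≤ (‖v‖₊ : ℝ≥0∞) := by
        rw [← enorm_eq_nnnorm, ← ofReal_norm]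
        exact ENNReal.ofReal_le_ofReal hvR
      have hv0 : (‖v‖₊ : ℝ≥0∞) ≠ 0 :=
        (lt_of_lt_of_le (ENNReal.ofReal_pos.2 hR0) hnv).ne'
      have key : (‖v‖₊ : ℝ≥0∞) ^ k ≤ ENNReal.ofReal (R ^ (k - m)) * (‖v‖₊ : ℝ≥0∞) ^ m := by
        have h1 : (‖v‖₊ : ℝ≥0∞) ^ k = (‖v‖₊ : ℝ≥0∞) ^ (k - m) * (‖v‖₊ : ℝ≥0∞) ^ m := by
          rw [← ENNReal.rpow_add _ _ hv0 ENNReal.coe_ne_top]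
          ring_nf
        rw [h1]
        refine mul_le_mul_left ?_ _
        rw [← ENNReal.ofReal_rpow_of_pos hR0]
        rw [show k - m = -(m - k) by ring, ENNReal.rpow_neg, ENNReal.rpow_neg]
        exact ENNReal.inv_le_inv.2 (ENNReal.rpow_le_rpow hnv (by linarith))
      calc (‖v‖₊ : ℝ≥0∞) ^ k * ENNReal.ofReal (g v)
          ≤ (ENNReal.ofReal (R ^ (k - m)) * (‖v‖₊ : ℝ≥0∞) ^ m) * ENNReal.ofReal (g v) :=
            mul_le_mul_left key _
        _ = ENNReal.ofReal (R ^ (k - m)) * ((‖v‖₊ : ℝ≥0∞) ^ m * ENNReal.ofReal (g v)) := by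
            ring
  have hmeas_ind : Measurable fun v : E =>
      (Metric.ball (0:E) R).indicator (fun v : E => (‖v‖₊ : ℝ≥0∞) ^ k * ENNReal.ofReal G) v :=
    ((measurable_nnnorm.coe_nnreal_ennreal.pow_const k).mul measurable_const).indicator
      measurableSet_ball
  have hball : (∫⁻ v in Metric.ball (0:E) R, (‖v‖₊ : ℝ≥0∞) ^ k * ENNReal.ofReal G)
      ≤ (ENNReal.ofReal (R ^ k) * ENNReal.ofReal G) * volume (Metric.ball (0:E) R) := by
    rw [← setLIntegral_const]
    refine setLIntegral_mono' measurableSet_ball (fun v hv => ?_)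
    refine mul_le_mul_left ?_ _
    have hvle : (‖v‖₊ : ℝ≥0∞) ≤ ENNReal.ofReal R := by
      rw [← enorm_eq_nnnorm, ← ofReal_norm]
      exact ENNReal.ofReal_le_ofReal (le_of_lt (by simpa [dist_zero_right] using hv))
    calc (‖v‖₊ : ℝ≥0∞) ^ k ≤ (ENNReal.ofReal R) ^ k := ENNReal.rpow_le_rpow hvle hk
      _ = ENNReal.ofReal (R ^ k) := ENNReal.ofReal_rpow_of_pos hR0
  have big : (∫⁻ v : E, (‖v‖₊ : ℝ≥0∞) ^ k * ENNReal.ofReal (g v))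
      ≤ ENNReal.ofReal (G * R ^ k * R ^ (d : ℕ) * c + R ^ (k - m) * x) := by
    calc (∫⁻ v : E, (‖v‖₊ : ℝ≥0∞) ^ k * ENNReal.ofReal (g v))
        ≤ ∫⁻ v : E, ((Metric.ball (0:E) R).indicator
              (fun v : E => (‖v‖₊ : ℝ≥0∞) ^ k * ENNReal.ofReal G) v
            + ENNReal.ofReal (R ^ (k - m)) * ((‖v‖₊ : ℝ≥0∞) ^ m * ENNReal.ofReal (g v))) :=
          lintegral_mono_ae hpt
      _ = (∫⁻ v in Metric.ball (0:E) R, (‖v‖₊ : ℝ≥0∞) ^ k * ENNReal.ofReal G)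
            + ENNReal.ofReal (R ^ (k - m)) * M := by
          rw [lintegral_add_left hmeas_ind, lintegral_indicator measurableSet_ball,
            lintegral_const_mul _ hmeasm]
      _ ≤ (ENNReal.ofReal (R ^ k) * ENNReal.ofReal G) * volume (Metric.ball (0:E) R)
            + ENNReal.ofReal (R ^ (k - m)) * M := add_le_add_left hball _
      _ = ENNReal.ofReal (G * R ^ k * R ^ (d : ℕ) * c + R ^ (k - m) * x) := by
          rw [Measure.addHaar_ball_of_pos volume (0:E) hR0, hMx]
          rw [show Module.finrank ℝ E = d from finrank_euclideanSpace_fin]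
          rw [show volume (Metric.ball (0:E) 1) = ENNReal.ofReal c from (ENNReal.ofReal_toReal hBtop).symm]
          rw [← ENNReal.ofReal_mul (by positivity : (0:ℝ) ≤ R ^ k),
            ← ENNReal.ofReal_mul (by positivity : (0:ℝ) ≤ R ^ (d:ℕ)),
            ← ENNReal.ofReal_mul (by positivity : (0:ℝ) ≤ R ^ k * G),
            ← ENNReal.ofReal_mul (by positivity : (0:ℝ) ≤ R ^ (k - m)),
            ← ENNReal.ofReal_add (by positivity) (by positivity)]
          congr 1
          ring
  have rhs_eq : ENNReal.ofReal ((c + 1) * G ^ ((m - k) / (m + d))) * M ^ ((k + d) / (m + d))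
      = ENNReal.ofReal ((c + 1) * G ^ ((m - k) / (m + d)) * x ^ ((k + d) / (m + d))) := by
    rw [hMx, ENNReal.ofReal_rpow_of_pos hx0, ← ENNReal.ofReal_mul hCpos.le]
  rw [rhs_eq]
  refine le_trans big (ENNReal.ofReal_le_ofReal (le_of_eq ?_))
  exact moment_interp_aux c k m d hk hkm x G hx0 hG
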